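/- For every r > 0, the Lebesgue integral over ℝ² of the function (x, y) ↦ (x − y)^{−2} over the set E_r = {(x, y) ∈ ℝ² : x ≠ y and the geodesic γ(x,y) intersects B̄_r(i)} equals 2π·sinh r. (Equivalently, the invariant measure of the ε-thickened cross-section of the geodesic flow over the circle of hyperbolic radius r about i is (ε/(π·area S))·2π·sinh r = 2ε·sinh r/area S, which is Proposition 2.1 of the paper.) -/

import Mathlib

set_option maxHeartbeats 1000000


open UpperHalfPlane MeasureTheory

/-- The complete hyperbolic geodesic of the upper half-plane with ideal endpoints `a` and `b`:
the Euclidean semicircle `{z ∈ ℍ : |z − (a+b)/2| = |a−b|/2}`. -/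
noncomputable def geodesic (a b : ℝ) : Set ℍ :=
  {z : ℍ | ‖(z : ℂ) - (((a + b) / 2 : ℝ) : ℂ)‖ = |a - b| / 2}

/-- The geodesic `γ(a,b)` is tangent to the hyperbolic disc `B_ρ(i)`:
the infimum of the hyperbolic distance from points of the geodesic to `i` equals `ρ`. -/
def TangentToDisc (a b ρ : ℝ) : Prop :=
  sInf ((fun z : ℍ => dist z UpperHalfPlane.I) '' geodesic a b) = ρ

/-- The geodesic `γ(a,b)` intersects the closed hyperbolic disc `B̄_r(i)`. -/
def MeetsClosedDisc (a b r : ℝ) : Prop :=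
  ∃ z ∈ geodesic a b, dist z UpperHalfPlane.I ≤ r

lemma cosh_dist_I (z : ℍ) :
    Real.cosh (dist z UpperHalfPlane.I) = (z.re ^ 2 + z.im ^ 2 + 1) / (2 * z.im) := by
  rw [UpperHalfPlane.cosh_dist]
  have h1 : ((UpperHalfPlane.I : ℍ) : ℂ) = Complex.I := rfl
  have h2 : (UpperHalfPlane.I : ℍ).im = 1 := rfl
  rw [h1, h2]
  have : dist (z : ℂ) Complex.I ^ 2 = z.re ^ 2 + (z.im - 1) ^ 2 := by
    rw [Complex.dist_eq, Complex.sq_norm, Complex.normSq_apply]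
    simp [Complex.sub_re, Complex.sub_im, UpperHalfPlane.coe_re, UpperHalfPlane.coe_im]
    ring
  rw [this]
  have hz : 0 < z.im := z.im_pos
  field_simp
  ring

lemma geodesic_mem_iff (x y : ℝ) (z : ℍ) :
    z ∈ geodesic x y ↔ (z.re - (x + y) / 2) ^ 2 + z.im ^ 2 = (x - y) ^ 2 / 4 := by
  unfold geodesic
  rw [Set.mem_setOf_eq]
  constructor
  · intro h
    have := congrArg (· ^ 2) h
    rw [Complex.sq_norm, Complex.normSq_apply] at this
    simp only [Complex.sub_re, Complex.sub_im, Complex.ofReal_re, Complex.ofReal_im,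
      UpperHalfPlane.coe_re, UpperHalfPlane.coe_im, sub_zero] at this
    rw [div_pow, sq_abs] at this
    nlinarith [this]
  · intro h
    have h2 : ‖(z : ℂ) - (((x + y) / 2 : ℝ) : ℂ)‖ ^ 2 = (|x - y| / 2) ^ 2 := by
      rw [Complex.sq_norm, Complex.normSq_apply]
      simp only [Complex.sub_re, Complex.sub_im, Complex.ofReal_re, Complex.ofReal_im,
        UpperHalfPlane.coe_re, UpperHalfPlane.coe_im, sub_zero]
      rw [div_pow, sq_abs]
      nlinarith [h]
    have ha : (0:ℝ) ≤ ‖(z : ℂ) - (((x + y) / 2 : ℝ) : ℂ)‖ := norm_nonneg _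
    have hb : (0:ℝ) ≤ |x - y| / 2 := by positivity
    calc ‖(z : ℂ) - (((x + y) / 2 : ℝ) : ℂ)‖
        = Real.sqrt (‖(z : ℂ) - (((x + y) / 2 : ℝ) : ℂ)‖ ^ 2) :=
          (Real.sqrt_sq ha).symm
      _ = Real.sqrt ((|x - y| / 2) ^ 2) := by rw [h2]
      _ = |x - y| / 2 := Real.sqrt_sq hb

lemma meets_iff (r x y : ℝ) (hr : 0 < r) (hxy : x ≠ y) :
    MeetsClosedDisc x y r ↔
      (x ^ 2 + 1) * (y ^ 2 + 1) ≤ (x - y) ^ 2 * Real.cosh r ^ 2 := by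
  have hcpos : (0:ℝ) < Real.cosh r := Real.cosh_pos r
  constructor
  · rintro ⟨z, hz, hd⟩
    set p := z.re with hp
    set q := z.im with hq
    have hq0 : 0 < q := z.im_pos
    have hz' : (p - (x + y) / 2) ^ 2 + q ^ 2 = (x - y) ^ 2 / 4 :=
      (geodesic_mem_iff x y z).mp hz
    have hcosh : Real.cosh (dist z UpperHalfPlane.I) ≤ Real.cosh r := by
      rw [Real.cosh_le_cosh, abs_of_nonneg dist_nonneg, abs_of_nonneg hr.le]
      exact hd
    rw [cosh_dist_I] at hcosh
    have h1 : p ^ 2 + q ^ 2 + 1 ≤ 2 * q * Real.cosh r := by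
      rw [div_le_iff₀ (by positivity)] at hcosh
      linarith [hcosh]
    have key : (x - y) ^ 2 / 4 * (p ^ 2 + q ^ 2 + 1) ^ 2
        - q ^ 2 * ((x ^ 2 + 1) * (y ^ 2 + 1)) =
        ((p - (x + y) / 2) * ((x ^ 2 + y ^ 2) / 2 + 1) + (x + y) * (x - y) ^ 2 / 4) ^ 2 := by
      linear_combination ((x - y) ^ 2 / 4 * ((x ^ 2 + y ^ 2) / 2 + 1
        + (x + y) * (p - (x + y) / 2)) + (x - y) ^ 2 / 4 * (p ^ 2 + q ^ 2 + 1)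
        - (x ^ 2 + 1) * (y ^ 2 + 1)) * hz'
    have h2 : (p ^ 2 + q ^ 2 + 1) ^ 2 ≤ (2 * q * Real.cosh r) ^ 2 := by
      nlinarith [h1, (show (0:ℝ) < p ^ 2 + q ^ 2 + 1 by positivity)]
    have h3 : q ^ 2 * ((x ^ 2 + 1) * (y ^ 2 + 1)) ≤
        q ^ 2 * ((x - y) ^ 2 * Real.cosh r ^ 2) := by
      nlinarith [key, mul_le_mul_of_nonneg_left h2
        (by positivity : (0:ℝ) ≤ (x - y) ^ 2 / 4),
        sq_nonneg ((p - (x + y) / 2) * ((x ^ 2 + y ^ 2) / 2 + 1)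
          + (x + y) * (x - y) ^ 2 / 4)]
    exact le_of_mul_le_mul_left h3 (by positivity : (0:ℝ) < q ^ 2)
  · intro h
    obtain ⟨A, hA⟩ : ∃ A : ℝ, A = (x ^ 2 + y ^ 2) / 2 + 1 := ⟨_, rfl⟩
    have hApos : 0 < A := by rw [hA]; positivity
    obtain ⟨D, hD⟩ : ∃ D : ℝ, D = Real.sqrt ((x ^ 2 + 1) * (y ^ 2 + 1)) := ⟨_, rfl⟩
    have hD2 : D ^ 2 = (x ^ 2 + 1) * (y ^ 2 + 1) := by
      rw [hD]; exact Real.sq_sqrt (by positivity)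
    have hDpos : 0 < D := by rw [hD]; exact Real.sqrt_pos.mpr (by positivity)
    have habs : 0 < |x - y| := abs_pos.mpr (sub_ne_zero.mpr hxy)
    obtain ⟨p, hpdef⟩ : ∃ p : ℝ, p = (x + y) / 2 - (x + y) * (x - y) ^ 2 / (4 * A) := ⟨_, rfl⟩
    obtain ⟨q, hqdef⟩ : ∃ q : ℝ, q = |x - y| / 2 * D / A := ⟨_, rfl⟩
    have hq0 : 0 < q := by rw [hqdef]; positivity
    have hq0' : 0 < (⟨p, q⟩ : ℂ).im := hq0
    have hzim : (UpperHalfPlane.mk ⟨p, q⟩ hq0').im = q := UpperHalfPlane.mk_im _ _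
    have hzre : (UpperHalfPlane.mk ⟨p, q⟩ hq0').re = p := UpperHalfPlane.mk_re _ _
    have hq2 : q ^ 2 = (x - y) ^ 2 / 4 * D ^ 2 / A ^ 2 := by
      have h0 : q ^ 2 = |x - y| ^ 2 / 4 * D ^ 2 / A ^ 2 := by rw [hqdef]; ring
      rw [h0, sq_abs]
    have hDA : D ^ 2 = A ^ 2 - (x + y) ^ 2 * (x - y) ^ 2 / 4 := by
      rw [hD2, hA]; ring
    have hmem : UpperHalfPlane.mk ⟨p, q⟩ hq0' ∈ geodesic x y := by
      rw [geodesic_mem_iff, hzre, hzim, hq2, hpdef]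
      have hAinv : A * A⁻¹ = 1 := mul_inv_cancel₀ hApos.ne'
      linear_combination ((x - y) ^ 2 / (4 * A ^ 2)) * hDA
        + ((A * A⁻¹ + 1) * (x - y) ^ 2 / 4) * hAinv
    refine ⟨UpperHalfPlane.mk ⟨p, q⟩ hq0', hmem, ?_⟩
    have hnum : p ^ 2 + q ^ 2 + 1 = D ^ 2 / A := by
      rw [hq2, hpdef]
      have hAinv : A * A⁻¹ = 1 := mul_inv_cancel₀ hApos.ne'
      linear_combination ((x - y) ^ 2 / (4 * A ^ 2) - 1 / A) * hDA
        + (-1 : ℝ) * hA + ((A * A⁻¹ + 1) * (x - y) ^ 2 / 4 - A) * hAinv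
    have hcd : Real.cosh (dist (UpperHalfPlane.mk ⟨p, q⟩ hq0') UpperHalfPlane.I)
        = D / |x - y| := by
      rw [cosh_dist_I, hzre, hzim, hnum, hqdef]
      field_simp
    have hDle : D ≤ |x - y| * Real.cosh r := by
      have h4 : D ^ 2 ≤ (|x - y| * Real.cosh r) ^ 2 := by
        rw [hD2, mul_pow, sq_abs]; exact h
      nlinarith [hDpos, mul_pos habs hcpos]
    have hle : Real.cosh (dist (UpperHalfPlane.mk ⟨p, q⟩ hq0') UpperHalfPlane.I)
        ≤ Real.cosh r := by
      rw [hcd, div_le_iff₀ habs]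
      linarith [hDle]
    have := Real.cosh_le_cosh.mp hle
    rwa [abs_of_nonneg dist_nonneg, abs_of_nonneg hr.le] at this

section Inner

variable (s a : ℝ)

/-- The section set for fixed first coordinate `a`. -/
def secSet (C a : ℝ) : Set ℝ :=
  {b : ℝ | a ≠ b ∧ (a ^ 2 + 1) * (b ^ 2 + 1) ≤ (a - b) ^ 2 * C}

lemma secSet_eq_image (C s a : ℝ) (hs : 0 < s) (hC : C = 1 + s ^ 2) :
    secSet C a = (fun t => a + t⁻¹) ''
      (Set.Icc ((-a - s) / (a ^ 2 + 1)) ((-a + s) / (a ^ 2 + 1)) \ {0}) := by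
  have hk : (0:ℝ) < a ^ 2 + 1 := by positivity
  ext b
  constructor
  · rintro ⟨hab, hcond⟩
    have hba : b - a ≠ 0 := sub_ne_zero.mpr (Ne.symm hab)
    refine ⟨(b - a)⁻¹, ⟨?_, by simp [inv_ne_zero hba]⟩, by field_simp; ring⟩
    set t := (b - a)⁻¹ with ht
    have htne : t ≠ 0 := inv_ne_zero hba
    have htb : (b - a) * t = 1 := by rw [ht]; field_simp
    have hsq : ((a ^ 2 + 1) * t + a) ^ 2 ≤ s ^ 2 := by
      have h1 : (a ^ 2 + 1) * (b ^ 2 + 1) * t ^ 2 ≤ C := by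
        have h2 : (a - b) ^ 2 * C * t ^ 2 = C := by
          have : (a - b) ^ 2 * t ^ 2 = 1 := by
            have : (a - b) * t = -1 := by
              have : a - b = -(b - a) := by ring
              rw [this, neg_mul, htb]
            calc (a - b) ^ 2 * t ^ 2 = ((a - b) * t) ^ 2 := by ring
              _ = 1 := by rw [this]; ring
          calc (a - b) ^ 2 * C * t ^ 2 = (a - b) ^ 2 * t ^ 2 * C := by ring
            _ = C := by rw [this]; ring
        calc (a ^ 2 + 1) * (b ^ 2 + 1) * t ^ 2
            ≤ (a - b) ^ 2 * C * t ^ 2 := by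
              have := sq_nonneg t
              nlinarith [hcond, sq_nonneg t]
          _ = C := h2
      -- identity: (a²+1)(b²+1)t² = ((a²+1)t + a)² + 1  given (b−a)t = 1
      have hid : (a ^ 2 + 1) * (b ^ 2 + 1) * t ^ 2 = ((a ^ 2 + 1) * t + a) ^ 2 + 1 := by
        linear_combination ((a ^ 2 + 1) * (b * t + a * t + 1)) * htb
      rw [hid] at h1
      rw [hC] at h1
      linarith
    constructor
    · rw [div_le_iff₀ hk]
      nlinarith [hsq, hs, sq_nonneg ((a ^ 2 + 1) * t + a + s)]
    · rw [le_div_iff₀ hk]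
      nlinarith [hsq, hs, sq_nonneg ((a ^ 2 + 1) * t + a - s)]
  · rintro ⟨t, ⟨⟨ht1, ht2⟩, ht0⟩, rfl⟩
    have htne : t ≠ 0 := by simpa using ht0
    have hab : a ≠ a + t⁻¹ := by
      intro hcon
      have : t⁻¹ = 0 := by linarith [hcon]
      exact htne (inv_eq_zero.mp this)
    refine ⟨hab, ?_⟩
    have hsq : ((a ^ 2 + 1) * t + a) ^ 2 ≤ s ^ 2 := by
      have e1 : -s ≤ (a ^ 2 + 1) * t + a := by
        rw [div_le_iff₀ hk] at ht1
        nlinarith [ht1]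
      have e2 : (a ^ 2 + 1) * t + a ≤ s := by
        rw [le_div_iff₀ hk] at ht2
        nlinarith [ht2]
      nlinarith [e1, e2]
    have key : (a ^ 2 + 1) * ((a + t⁻¹) ^ 2 + 1) * t ^ 2
        = ((a ^ 2 + 1) * t + a) ^ 2 + 1 := by
      have hti : t * t⁻¹ = 1 := mul_inv_cancel₀ htne
      linear_combination ((a ^ 2 + 1) * (2 * a * t + t * t⁻¹ + 1)) * hti
    have hC1 : (a ^ 2 + 1) * ((a + t⁻¹) ^ 2 + 1) * t ^ 2 ≤ C := by
      rw [key, hC]; linarith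
    have ht2pos : 0 < t ^ 2 := by positivity
    have hgoal2 : (a - (a + t⁻¹)) ^ 2 * C * t ^ 2 = C := by
      have h3 : (a - (a + t⁻¹)) ^ 2 * t ^ 2 = 1 := by
        have : (a - (a + t⁻¹)) * t = -1 := by field_simp; ring
        calc (a - (a + t⁻¹)) ^ 2 * t ^ 2 = ((a - (a + t⁻¹)) * t) ^ 2 := by ring
          _ = 1 := by rw [this]; ring
      calc (a - (a + t⁻¹)) ^ 2 * C * t ^ 2 = (a - (a + t⁻¹)) ^ 2 * t ^ 2 * C := by ring
        _ = C := by rw [h3]; ring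
    have := hC1
    rw [← hgoal2] at this
    exact le_of_mul_le_mul_right this ht2pos

end Inner

lemma secSet_aux (C s a : ℝ) (hs : 0 < s) (hC : C = 1 + s ^ 2) :
    IntegrableOn (fun b => ((a - b) ^ 2)⁻¹) (secSet C a) ∧
    ∫ b in secSet C a, ((a - b) ^ 2)⁻¹ = 2 * s / (a ^ 2 + 1) := by
  have hk : (0:ℝ) < a ^ 2 + 1 := by positivity
  set t₁ := (-a - s) / (a ^ 2 + 1) with ht₁
  set t₂ := (-a + s) / (a ^ 2 + 1) with ht₂
  set S := Set.Icc t₁ t₂ \ {0} with hSdef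
  have hS : MeasurableSet S := measurableSet_Icc.diff (measurableSet_singleton 0)
  have hderiv : ∀ t ∈ S, HasDerivWithinAt (fun t : ℝ => a + t⁻¹) (-(t ^ 2)⁻¹) S t := by
    intro t ht
    have htne : t ≠ 0 := by simpa using ht.2
    exact ((hasDerivAt_inv htne).const_add a).hasDerivWithinAt
  have hinj : Set.InjOn (fun t : ℝ => a + t⁻¹) S := by
    intro u _ v _ h
    simp only at h
    exact inv_injective (by linarith)
  have himg := secSet_eq_image C s a hs hC
  have heq : Set.EqOn (fun _ : ℝ => (1:ℝ))
      (fun t => |(-(t ^ 2)⁻¹)| • ((a - (a + t⁻¹)) ^ 2)⁻¹) S := by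
    intro t ht
    have htne : t ≠ 0 := by simpa using ht.2
    simp only [smul_eq_mul, abs_neg, abs_inv, sq_abs]
    have h1 : a - (a + t⁻¹) = -t⁻¹ := by ring
    rw [h1]
    field_simp
    exact abs_of_nonneg (sq_nonneg t)
  have hIcc : volume S = ENNReal.ofReal (t₂ - t₁) := by
    rw [hSdef, measure_diff_null (by simp), Real.volume_Icc]
  have ht12 : t₂ - t₁ = 2 * s / (a ^ 2 + 1) := by
    rw [ht₁, ht₂, div_sub_div_same]; ring_nf
  constructor
  · rw [himg, integrableOn_image_iff_integrableOn_abs_deriv_smul hS hderiv hinj]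
    have hconst : IntegrableOn (fun _ : ℝ => (1:ℝ)) S := by
      apply (integrableOn_const_iff).mpr (Or.inr _)
      calc volume S = ENNReal.ofReal (t₂ - t₁) := hIcc
        _ < ⊤ := ENNReal.ofReal_lt_top
    exact hconst.congr_fun heq hS
  · rw [himg, integral_image_eq_integral_abs_deriv_smul hS hderiv hinj]
    rw [← setIntegral_congr_fun hS heq]
    rw [setIntegral_const, measureReal_def, hIcc, smul_eq_mul, mul_one, ENNReal.toReal_ofReal_eq_iff.mpr]
    · exact ht12
    · rw [ht12]; positivity

lemma secSet_measurable (C a : ℝ) : MeasurableSet (secSet C a) := by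
  have : secSet C a = {b : ℝ | a = b}ᶜ ∩
      {b : ℝ | (a ^ 2 + 1) * (b ^ 2 + 1) ≤ (a - b) ^ 2 * C} := by
    ext b
    simp only [secSet, Set.mem_setOf_eq, Set.mem_inter_iff, Set.mem_compl_iff]
  rw [this]
  exact ((isClosed_eq continuous_const continuous_id).measurableSet.compl).inter
    ((isClosed_le (by continuity) (by continuity)).measurableSet)

/-- For every r > 0, the Lebesgue integral over ℝ² of (x − y)⁻² over
E_r = {(x,y) : x ≠ y and γ(x,y) meets B̄_r(i)} equals 2π·sinh r. -/
theorem integral_over_Er (r : ℝ) (hr : 0 < r) :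
    ∫ p in {p : ℝ × ℝ | p.1 ≠ p.2 ∧ MeetsClosedDisc p.1 p.2 r}, ((p.1 - p.2) ^ 2)⁻¹ =
      2 * Real.pi * Real.sinh r := by
  set C : ℝ := Real.cosh r ^ 2 with hCdef
  set s : ℝ := Real.sinh r with hsdef
  have hs : 0 < s := Real.sinh_pos_iff.mpr hr
  have hC : C = 1 + s ^ 2 := by
    rw [hCdef, hsdef, Real.cosh_sq]; ring
  set f : ℝ × ℝ → ℝ := fun p => ((p.1 - p.2) ^ 2)⁻¹ with hfdef
  set E : Set (ℝ × ℝ) :=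
    {p : ℝ × ℝ | p.1 ≠ p.2 ∧ (p.1 ^ 2 + 1) * (p.2 ^ 2 + 1) ≤ (p.1 - p.2) ^ 2 * C}
    with hEdef
  have hset : {p : ℝ × ℝ | p.1 ≠ p.2 ∧ MeetsClosedDisc p.1 p.2 r} = E := by
    ext p
    exact and_congr_right fun h => meets_iff r p.1 p.2 hr h
  have hE : MeasurableSet E := by
    have : E = {p : ℝ × ℝ | p.1 = p.2}ᶜ ∩
        {p : ℝ × ℝ | (p.1 ^ 2 + 1) * (p.2 ^ 2 + 1) ≤ (p.1 - p.2) ^ 2 * C} := by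
      ext p; simp [hEdef, Set.mem_setOf_eq, Set.mem_compl_iff]
    rw [this]
    exact ((isClosed_eq continuous_fst continuous_snd).measurableSet.compl).inter
      ((isClosed_le (by continuity) (by continuity)).measurableSet)
  have hind : ∀ x y : ℝ, E.indicator f (x, y)
      = (secSet C x).indicator (fun b => ((x - b) ^ 2)⁻¹) y := by
    intro x y
    have hmemiff : (x, y) ∈ E ↔ y ∈ secSet C x := Iff.rfl
    by_cases h : (x, y) ∈ E
    · rw [Set.indicator_of_mem h, Set.indicator_of_mem (hmemiff.mp h)]
    · rw [Set.indicator_of_notMem h, Set.indicator_of_notMem (fun hc => h (hmemiff.mpr hc))]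
  have hmeas : AEStronglyMeasurable (E.indicator f)
      ((volume : Measure ℝ).prod (volume : Measure ℝ)) := by
    rw [← MeasureTheory.Measure.volume_eq_prod]
    exact ((((measurable_fst.sub measurable_snd).pow_const 2).inv).indicator hE).aestronglyMeasurable
  have hval : ∀ x : ℝ, (∫ y : ℝ, ‖E.indicator f (x, y)‖) = 2 * s / (x ^ 2 + 1) := by
    intro x
    have h1 : (fun y => ‖E.indicator f (x, y)‖)
        = (secSet C x).indicator (fun b => ((x - b) ^ 2)⁻¹) := by
      funext y
      rw [Real.norm_eq_abs, hind x y, abs_of_nonneg]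
      exact Set.indicator_nonneg (fun b _ => by positivity) y
    rw [h1, integral_indicator (secSet_measurable C x)]
    exact (secSet_aux C s x hs hC).2
  have hint : Integrable (E.indicator f)
      ((volume : Measure ℝ).prod (volume : Measure ℝ)) := by
    refine (integrable_prod_iff hmeas).mpr ⟨?_, ?_⟩
    · refine Filter.Eventually.of_forall fun x => ?_
      have h2 : (fun y => E.indicator f (x, y))
          = (secSet C x).indicator (fun b => ((x - b) ^ 2)⁻¹) := funext (hind x)
      rw [h2, integrable_indicator_iff (secSet_measurable C x)]
      exact (secSet_aux C s x hs hC).1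
    · refine (Integrable.congr ((integrable_inv_one_add_sq).const_mul (2 * s)) ?_)
      exact Filter.Eventually.of_forall fun x =>
        ((hval x).trans (by ring : 2 * s / (x ^ 2 + 1) = 2 * s * (1 + x ^ 2)⁻¹)).symm
  have hvalint : ∀ x : ℝ, (∫ y : ℝ, E.indicator f (x, y)) = 2 * s / (x ^ 2 + 1) := by
    intro x
    have h2 : (fun y => E.indicator f (x, y))
        = (secSet C x).indicator (fun b => ((x - b) ^ 2)⁻¹) := funext (hind x)
    rw [h2, integral_indicator (secSet_measurable C x)]
    exact (secSet_aux C s x hs hC).2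
  calc ∫ p in {p : ℝ × ℝ | p.1 ≠ p.2 ∧ MeetsClosedDisc p.1 p.2 r}, ((p.1 - p.2) ^ 2)⁻¹
      = ∫ p in E, f p := by rw [hset]
    _ = ∫ p : ℝ × ℝ, E.indicator f p := (integral_indicator hE).symm
    _ = ∫ x : ℝ, ∫ y : ℝ, E.indicator f (x, y) := by
        rw [MeasureTheory.Measure.volume_eq_prod]
        exact MeasureTheory.integral_prod _ hint
    _ = ∫ x : ℝ, 2 * s * (1 + x ^ 2)⁻¹ := by
        refine integral_congr_ae (Filter.Eventually.of_forall fun x => ?_)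
        show (∫ y : ℝ, E.indicator f (x, y)) = 2 * s * (1 + x ^ 2)⁻¹
        rw [hvalint x]; ring
    _ = 2 * s * ∫ x : ℝ, (1 + x ^ 2)⁻¹ := MeasureTheory.integral_const_mul _ _
    _ = 2 * Real.pi * Real.sinh r := by
        rw [integral_univ_inv_one_add_sq, hsdef]; ring
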